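/- Let V be a vector space over a field F and let v(a,b) = C(a,b) + ρ(a) + σ(b) + t be a bi-affine map on V (C bilinear, ρ, σ linear, t ∈ V) satisfying the vector-valued Leibniz rule: for all a, b, c ∈ V, v(v(a,b), c) − v(0,c) = (v(v(a,c), b) − v(0,b)) + (v(a, v(b,c)) − v(a,0)). Define {a,b} := v(a,b) + a. Then {−,−} satisfies the derivative identity {{a,b},c} = {{a,c},b} − {a,b} + {a,{b,c}} for all a, b, c ∈ V, i.e. it is a derivative affine Leibniz bracket. -/
import Mathlib


/-- If the bi-affine map `v(a,b) = C a b + ρ a + σ b + t` on a vector space `V`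
satisfies the vector-valued Leibniz rule, then `{a,b} := v(a,b) + a` satisfies the
derivative identity `{{a,b},c} = {{a,c},b} − {a,b} + {a,{b,c}}`, i.e., it is a
derivative affine Leibniz bracket. -/
theorem vector_valued_leibniz_gives_derivative_bracket
    {F V : Type*} [Field F] [AddCommGroup V] [Module F V]
    (C : V →ₗ[F] V →ₗ[F] V) (ρ σ : V →ₗ[F] V) (t : V)
    (v : V → V → V) (hv : ∀ a b, v a b = C a b + ρ a + σ b + t)
    (hleib : ∀ a b c : V,
      v (v a b) c - v 0 c = (v (v a c) b - v 0 b) + (v a (v b c) - v a 0))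
    (br : V → V → V) (hbr : ∀ a b, br a b = v a b + a) :
    ∀ a b c : V, br (br a b) c = br (br a c) b - br a b + br a (br b c) := by
  intro a b c
  have h := hleib a b c
  simp only [hv, hbr, map_add, map_zero, LinearMap.add_apply, LinearMap.zero_apply,
    LinearMap.map_add, LinearMap.map_zero] at h ⊢
  linear_combination (norm := abel) h
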